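/- Let f_n = k_n a_n k'_n ∈ GL(d,ℝ) with k_n, k'_n orthogonal and a_n = diag(a_n^1 ≥ ... ≥ a_n^d > 0), a_n^i = o(a_n^1) for i > 1, and k'_n^{-1} e_1 → z. Then for x, y ∈ ℝ^d \ {0} with ⟨z,x⟩ ≠ 0 and ⟨z,y⟩ ≠ 0, the projective distances satisfy δ(f_n·[x], f_n·[y]) → 0; moreover δ(f_n·[x], f_n·[y])/δ([x],[y]) ≤ d² (a_n²/a_n¹) / (|⟨k'_n x/‖x‖, e_1⟩||⟨k'_n y/‖y‖, e_1⟩|). -/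

import Mathlib

open Matrix Filter Topology RealInnerProductSpace

noncomputable def eu (d : ℕ) (x : Fin d → ℝ) : EuclideanSpace ℝ (Fin d) := WithLp.toLp 2 x

/-- The metric `δ([u],[v]) = ‖u ∧ v‖/(‖u‖‖v‖)` on `ℙ^{d-1}`, computed on representatives,
with `‖u ∧ v‖² = ‖u‖²‖v‖² - ⟨u,v⟩²`. -/
noncomputable def pdist (d : ℕ) (u v : Fin d → ℝ) : ℝ :=
  Real.sqrt (‖eu d u‖ ^ 2 * ‖eu d v‖ ^ 2 - (inner ℝ (eu d u) (eu d v) : ℝ) ^ 2) /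
    (‖eu d u‖ * ‖eu d v‖)

lemma inner_eu (d : ℕ) (u v : Fin d → ℝ) : (inner ℝ (eu d u) (eu d v) : ℝ) = ∑ i, u i * v i := by
  simp [eu, PiLp.inner_apply, RCLike.inner_apply]
  exact Finset.sum_congr rfl fun i _ => mul_comm _ _

lemma norm_eu_sq (d : ℕ) (u : Fin d → ℝ) : ‖eu d u‖ ^ 2 = ∑ i, u i ^ 2 := by
  rw [← real_inner_self_eq_norm_sq, inner_eu]
  exact Finset.sum_congr rfl fun i _ => (sq (u i)).symm

lemma eu_ne_zero {d : ℕ} {u : Fin d → ℝ} (hu : u ≠ 0) : eu d u ≠ 0 := fun h => hu (by simpa [eu] using h)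

lemma norm_eu_pos {d : ℕ} {u : Fin d → ℝ} (hu : u ≠ 0) : 0 < ‖eu d u‖ :=
  norm_pos_iff.mpr (eu_ne_zero hu)

lemma lagrange (d : ℕ) (u v : Fin d → ℝ) :
    ‖eu d u‖ ^ 2 * ‖eu d v‖ ^ 2 - (inner ℝ (eu d u) (eu d v) : ℝ) ^ 2
      = (1/2) * ∑ i, ∑ j, (u i * v j - u j * v i) ^ 2 := by
  rw [norm_eu_sq, norm_eu_sq, inner_eu]
  have e1 : (∑ i, u i ^ 2) * (∑ i, v i ^ 2) = ∑ i, ∑ j, u i ^ 2 * v j ^ 2 :=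
    Finset.sum_mul_sum _ _ _ _
  have e2 : (∑ i, u i * v i) ^ 2 = ∑ i, ∑ j, (u i * v i) * (u j * v j) := by
    rw [sq]; exact Finset.sum_mul_sum _ _ _ _
  have e3 : ∑ i, ∑ j : Fin d, (u i * v j - u j * v i) ^ 2
      = ∑ i, ∑ j, ((u i ^ 2 * v j ^ 2 + u j ^ 2 * v i ^ 2) - 2 * ((u i * v i) * (u j * v j))) :=
    Finset.sum_congr rfl fun i _ => Finset.sum_congr rfl fun j _ => by ring
  have e4 : ∑ i, ∑ j : Fin d, ((u i ^ 2 * v j ^ 2 + u j ^ 2 * v i ^ 2) - 2 * ((u i * v i) * (u j * v j)))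
      = ((∑ i, ∑ j, u i ^ 2 * v j ^ 2) + (∑ i, ∑ j : Fin d, u j ^ 2 * v i ^ 2))
        - 2 * ∑ i, ∑ j, (u i * v i) * (u j * v j) := by
    simp [Finset.sum_sub_distrib, Finset.sum_add_distrib, Finset.mul_sum]
  have e5 : ∑ i, ∑ j : Fin d, u j ^ 2 * v i ^ 2 = ∑ i, ∑ j, u i ^ 2 * v j ^ 2 :=
    Finset.sum_comm
  rw [e1, e2, e3, e4, e5]; ring
noncomputable def Wd (d : ℕ) (u v : Fin d → ℝ) : ℝ :=
  ‖eu d u‖ ^ 2 * ‖eu d v‖ ^ 2 - (inner ℝ (eu d u) (eu d v) : ℝ) ^ 2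

lemma pdist_eq (d : ℕ) (u v : Fin d → ℝ) :
    pdist d u v = Real.sqrt (Wd d u v) / (‖eu d u‖ * ‖eu d v‖) := rfl

lemma Wd_nonneg (d : ℕ) (u v : Fin d → ℝ) : 0 ≤ Wd d u v := by
  rw [Wd, lagrange]
  positivity

lemma pdist_nonneg (d : ℕ) (u v : Fin d → ℝ) : 0 ≤ pdist d u v :=
  div_nonneg (Real.sqrt_nonneg _) (mul_nonneg (norm_nonneg _) (norm_nonneg _))

lemma inner_orth {d : ℕ} {k : Matrix (Fin d) (Fin d) ℝ} (hk : kᵀ * k = 1) (u v : Fin d → ℝ) :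
    (inner ℝ (eu d (k.mulVec u)) (eu d (k.mulVec v)) : ℝ) = inner ℝ (eu d u) (eu d v) := by
  rw [inner_eu, inner_eu]
  have h1 : ∑ i, (k.mulVec u) i * (k.mulVec v) i = (k *ᵥ u) ⬝ᵥ (k *ᵥ v) := rfl
  have h2 : ∑ i, u i * v i = u ⬝ᵥ v := rfl
  rw [h1, h2, Matrix.dotProduct_mulVec, Matrix.vecMul_mulVec, hk, Matrix.vecMul_one]

lemma norm_orth {d : ℕ} {k : Matrix (Fin d) (Fin d) ℝ} (hk : kᵀ * k = 1) (u : Fin d → ℝ) :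
    ‖eu d (k.mulVec u)‖ = ‖eu d u‖ := by
  have h := inner_orth hk u u
  rw [real_inner_self_eq_norm_sq, real_inner_self_eq_norm_sq] at h
  rw [← Real.sqrt_sq (norm_nonneg (eu d (k.mulVec u))), h, Real.sqrt_sq (norm_nonneg _)]

lemma pdist_orth {d : ℕ} {k : Matrix (Fin d) (Fin d) ℝ} (hk : kᵀ * k = 1) (u v : Fin d → ℝ) :
    pdist d (k.mulVec u) (k.mulVec v) = pdist d u v := by
  rw [pdist, pdist, inner_orth hk, norm_orth hk, norm_orth hk]

lemma Wd_diag_le {d : ℕ} (a : Fin d → ℝ) (hpos : ∀ i, 0 < a i) {i0 i1 : Fin d}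
    (hbot : ∀ i, a i ≤ a i0) (hsnd : ∀ i, i ≠ i0 → a i ≤ a i1)
    (u v : Fin d → ℝ) :
    Wd d ((Matrix.diagonal a).mulVec u) ((Matrix.diagonal a).mulVec v)
      ≤ (a i0 * a i1) ^ 2 * Wd d u v := by
  rw [Wd, Wd, lagrange, lagrange, ← mul_assoc, mul_comm ((a i0 * a i1)^2) (1/2 : ℝ), mul_assoc]
  refine mul_le_mul_of_nonneg_left ?_ (by norm_num)
  rw [Finset.mul_sum]
  refine Finset.sum_le_sum fun i _ => ?_
  rw [Finset.mul_sum]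
  refine Finset.sum_le_sum fun j _ => ?_
  simp only [Matrix.mulVec_diagonal]
  rcases eq_or_ne i j with rfl | hij
  · simp only [sub_self]
    norm_num
  · have hmul : a i * a j ≤ a i0 * a i1 := by
      rcases eq_or_ne i i0 with rfl | hi
      · exact mul_le_mul_of_nonneg_left (hsnd j (fun h => hij (h.trans rfl ▸ rfl))) (hpos i).le
      · calc a i * a j ≤ a i1 * a i0 :=
              mul_le_mul (hsnd i hi) (hbot j) (hpos j).le (le_trans (hpos i).le (hsnd i hi))
          _ = a i0 * a i1 := mul_comm _ _
    have hsq : (a i * a j) ^ 2 ≤ (a i0 * a i1) ^ 2 :=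
      pow_le_pow_left₀ (mul_nonneg (hpos i).le (hpos j).le) hmul 2
    calc (a i * u i * (a j * v j) - a j * u j * (a i * v i)) ^ 2
        = (a i * a j) ^ 2 * (u i * v j - u j * v i) ^ 2 := by ring
      _ ≤ (a i0 * a i1) ^ 2 * (u i * v j - u j * v i) ^ 2 :=
          mul_le_mul_of_nonneg_right hsq (sq_nonneg _)

lemma norm_diag_ge {d : ℕ} (a : Fin d → ℝ) (hpos : ∀ i, 0 < a i) (u : Fin d → ℝ) (i0 : Fin d) :
    a i0 * |u i0| ≤ ‖eu d ((Matrix.diagonal a).mulVec u)‖ := by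
  have h2 : ‖eu d ((Matrix.diagonal a).mulVec u)‖ ^ 2 = ∑ i, (a i * u i) ^ 2 := by
    rw [norm_eu_sq]
    exact Finset.sum_congr rfl fun i _ => by rw [Matrix.mulVec_diagonal]
  have hle : (a i0 * u i0) ^ 2 ≤ ‖eu d ((Matrix.diagonal a).mulVec u)‖ ^ 2 := by
    rw [h2]
    exact Finset.single_le_sum (f := fun i => (a i * u i) ^ 2) (fun i _ => sq_nonneg _) (Finset.mem_univ i0)
  calc a i0 * |u i0| = |a i0 * u i0| := by rw [abs_mul, abs_of_pos (hpos i0)]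
    _ = Real.sqrt ((a i0 * u i0) ^ 2) := (Real.sqrt_sq_eq_abs _).symm
    _ ≤ Real.sqrt (‖eu d ((Matrix.diagonal a).mulVec u)‖ ^ 2) := Real.sqrt_le_sqrt hle
    _ = _ := Real.sqrt_sq (norm_nonneg _)

lemma diag_mulVec_ne_zero {d : ℕ} (a : Fin d → ℝ) (hpos : ∀ i, 0 < a i) {u : Fin d → ℝ}
    (hu : u ≠ 0) : (Matrix.diagonal a).mulVec u ≠ 0 := by
  intro h
  apply hu
  funext i
  have := congrFun h i
  rw [Matrix.mulVec_diagonal] at this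
  simpa [Pi.zero_apply, (hpos i).ne'] using this

lemma key_ineq {d : ℕ} (a : Fin d → ℝ) (hpos : ∀ i, 0 < a i) {i0 i1 : Fin d}
    (hbot : ∀ i, a i ≤ a i0) (hsnd : ∀ i, i ≠ i0 → a i ≤ a i1)
    {u v : Fin d → ℝ} (hu : u ≠ 0) (hv : v ≠ 0) :
    pdist d ((Matrix.diagonal a).mulVec u) ((Matrix.diagonal a).mulVec v)
        * (|u i0| / ‖eu d u‖) * (|v i0| / ‖eu d v‖)
      ≤ (a i1 / a i0) * pdist d u v := by
  set A := Matrix.diagonal a with hA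
  have ha0 := hpos i0
  have ha1 := hpos i1
  have hS : 0 < ‖eu d u‖ := norm_eu_pos hu
  have hT : 0 < ‖eu d v‖ := norm_eu_pos hv
  have hSA : 0 < ‖eu d (A.mulVec u)‖ := norm_eu_pos (diag_mulVec_ne_zero a hpos hu)
  have hTA : 0 < ‖eu d (A.mulVec v)‖ := norm_eu_pos (diag_mulVec_ne_zero a hpos hv)
  have hW0 : 0 ≤ Wd d u v := Wd_nonneg d u v
  -- sqrt bound
  have hP : Real.sqrt (Wd d (A.mulVec u) (A.mulVec v))
      ≤ (a i0 * a i1) * Real.sqrt (Wd d u v) := by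
    have := Real.sqrt_le_sqrt (Wd_diag_le a hpos hbot hsnd u v)
    rwa [Real.sqrt_mul (sq_nonneg _), Real.sqrt_sq (by positivity)] at this
  have hu0 : |u i0| ≤ ‖eu d (A.mulVec u)‖ / a i0 :=
    (le_div_iff₀ ha0).mpr (by rw [mul_comm]; exact norm_diag_ge a hpos u i0)
  have hv0 : |v i0| ≤ ‖eu d (A.mulVec v)‖ / a i0 :=
    (le_div_iff₀ ha0).mpr (by rw [mul_comm]; exact norm_diag_ge a hpos v i0)
  rw [pdist_eq, pdist_eq, div_mul_div_comm, div_mul_div_comm, div_mul_div_comm]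
  rw [div_le_div_iff₀ (by positivity) (by positivity)]
  have h1 : Real.sqrt (Wd d (A.mulVec u) (A.mulVec v)) * |u i0|
      ≤ ((a i0 * a i1) * Real.sqrt (Wd d u v)) * (‖eu d (A.mulVec u)‖ / a i0) :=
    mul_le_mul hP hu0 (abs_nonneg _) (by positivity)
  have h2 : Real.sqrt (Wd d (A.mulVec u) (A.mulVec v)) * |u i0| * |v i0|
      ≤ (((a i0 * a i1) * Real.sqrt (Wd d u v)) * (‖eu d (A.mulVec u)‖ / a i0))
          * (‖eu d (A.mulVec v)‖ / a i0) :=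
    mul_le_mul h1 hv0 (abs_nonneg _) (by positivity)
  have h3 := mul_le_mul_of_nonneg_right h2 (by positivity :
    (0:ℝ) ≤ a i0 * (‖eu d u‖ * ‖eu d v‖))
  calc Real.sqrt (Wd d (A.mulVec u) (A.mulVec v)) * |u i0| * |v i0|
        * (a i0 * (‖eu d u‖ * ‖eu d v‖))
      ≤ (((a i0 * a i1) * Real.sqrt (Wd d u v)) * (‖eu d (A.mulVec u)‖ / a i0))
          * (‖eu d (A.mulVec v)‖ / a i0) * (a i0 * (‖eu d u‖ * ‖eu d v‖)) := h3
    _ = a i1 * Real.sqrt (Wd d u v) * (‖eu d (A.mulVec u)‖ * ‖eu d (A.mulVec v)‖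
          * ‖eu d u‖ * ‖eu d v‖) := by field_simp

lemma inner_mulVec_left {d : ℕ} (k : Matrix (Fin d) (Fin d) ℝ) (u w : Fin d → ℝ) :
    (inner ℝ (eu d (k.mulVec u)) (eu d w) : ℝ) = inner ℝ (eu d u) (eu d (kᵀ.mulVec w)) := by
  rw [inner_eu, inner_eu]
  have h1 : ∑ i, (k.mulVec u) i * w i = (k *ᵥ u) ⬝ᵥ w := rfl
  have h2 : ∑ i, u i * (kᵀ.mulVec w) i = u ⬝ᵥ (kᵀ *ᵥ w) := rfl
  rw [h1, h2]
  calc (k *ᵥ u) ⬝ᵥ w = w ⬝ᵥ (k *ᵥ u) := dotProduct_comm _ _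
    _ = (w ᵥ* k) ⬝ᵥ u := Matrix.dotProduct_mulVec _ _ _
    _ = (kᵀ *ᵥ w) ⬝ᵥ u := by rw [Matrix.mulVec_transpose]
    _ = u ⬝ᵥ (kᵀ *ᵥ w) := dotProduct_comm _ _

lemma mulVec_ne_zero_of_orth {d : ℕ} {k : Matrix (Fin d) (Fin d) ℝ} (hk : kᵀ * k = 1)
    {x : Fin d → ℝ} (hx : x ≠ 0) : k.mulVec x ≠ 0 := by
  intro h
  apply hx
  have h2 : (kᵀ * k).mulVec x = kᵀ.mulVec (k.mulVec x) := (Matrix.mulVec_mulVec x kᵀ k).symm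
  rw [hk, Matrix.one_mulVec, h, Matrix.mulVec_zero] at h2
  exact h2

/-- With `f_n = k_n a_n k'_n` in KAK form, `a_n^i = o(a_n^1)` for `i > 1` and
`k'_n⁻¹e_1 → z`: for nonzero `x, y` with `⟨z,x⟩ ≠ 0 ≠ ⟨z,y⟩` one has
`δ(f_n·[x], f_n·[y]) → 0`, and for all `n` the bound
`δ(f_n·[x], f_n·[y]) · |⟨k'_n x/‖x‖, e₁⟩| · |⟨k'_n y/‖y‖, e₁⟩| ≤ d² (a_n²/a_n¹) δ([x],[y])`
(the division by the inner products being moved to the left-hand side). -/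
theorem stmt14 (d : ℕ) (hd : 1 < d)
    (f k k' : ℕ → Matrix (Fin d) (Fin d) ℝ) (α : ℕ → Fin d → ℝ)
    (hk : ∀ n, k n ∈ Matrix.orthogonalGroup (Fin d) ℝ)
    (hk' : ∀ n, k' n ∈ Matrix.orthogonalGroup (Fin d) ℝ)
    (hf : ∀ n, f n = k n * Matrix.diagonal (α n) * k' n)
    (hpos : ∀ n i, 0 < α n i)
    (hmono : ∀ n, ∀ i j : Fin d, i ≤ j → α n j ≤ α n i)
    (hlittleo : ∀ i : Fin d, i ≠ ⟨0, Nat.lt_of_lt_of_le Nat.zero_lt_one hd.le⟩ →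
      Tendsto (fun n => α n i / α n ⟨0, Nat.lt_of_lt_of_le Nat.zero_lt_one hd.le⟩)
        atTop (𝓝 0))
    (z : Fin d → ℝ) (hz : ‖eu d z‖ = 1)
    (hconv : Tendsto
      (fun n => eu d ((k' n)⁻¹.mulVec (Pi.single ⟨0, Nat.lt_of_lt_of_le Nat.zero_lt_one hd.le⟩ 1)))
      atTop (𝓝 (eu d z)))
    (x y : Fin d → ℝ) (hx : x ≠ 0) (hy : y ≠ 0)
    (hzx : ⟪eu d z, eu d x⟫ ≠ 0) (hzy : ⟪eu d z, eu d y⟫ ≠ 0) :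
    Tendsto (fun n => pdist d ((f n).mulVec x) ((f n).mulVec y)) atTop (𝓝 0) ∧
    ∀ n : ℕ,
      pdist d ((f n).mulVec x) ((f n).mulVec y) *
        (|⟪eu d ((k' n).mulVec x), eu d (Pi.single ⟨0, Nat.lt_of_lt_of_le Nat.zero_lt_one hd.le⟩ 1)⟫| / ‖eu d x‖) *
        (|⟪eu d ((k' n).mulVec y), eu d (Pi.single ⟨0, Nat.lt_of_lt_of_le Nat.zero_lt_one hd.le⟩ 1)⟫| / ‖eu d y‖) ≤
      (d : ℝ) ^ 2 * (α n ⟨1, hd⟩ / α n ⟨0, Nat.lt_of_lt_of_le Nat.zero_lt_one hd.le⟩) *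
        pdist d x y := by
  set i0 : Fin d := ⟨0, Nat.lt_of_lt_of_le Nat.zero_lt_one hd.le⟩ with hi0
  set i1 : Fin d := ⟨1, hd⟩ with hi1
  set e₁ : Fin d → ℝ := Pi.single i0 1 with he₁
  -- orthogonality facts
  have hkt : ∀ n, (k n)ᵀ * (k n) = 1 := fun n => by
    have h := (Matrix.mem_orthogonalGroup_iff' (Fin d) ℝ).mp (hk n)
    exact h
  have hk't : ∀ n, (k' n)ᵀ * (k' n) = 1 := fun n => by
    have h := (Matrix.mem_orthogonalGroup_iff' (Fin d) ℝ).mp (hk' n)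
    exact h
  have hk'r : ∀ n, (k' n) * (k' n)ᵀ = 1 := fun n => by
    have h := (Matrix.mem_orthogonalGroup_iff (Fin d) ℝ).mp (hk' n)
    exact h
  have hinv : ∀ n, (k' n)⁻¹ = (k' n)ᵀ := fun n => Matrix.inv_eq_right_inv (hk'r n)
  -- ordering facts
  have hbot : ∀ n i, α n i ≤ α n i0 := fun n i => hmono n i0 i (by simp [hi0, Fin.le_def])
  have hsnd : ∀ n, ∀ i : Fin d, i ≠ i0 → α n i ≤ α n i1 := fun n i hi => by
    refine hmono n i1 i ?_
    have hv : i.val ≠ 0 := fun h => hi (by apply Fin.ext; simp [hi0, h])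
    simp [hi1, Fin.le_def, Nat.one_le_iff_ne_zero, hv]
  -- decomposition
  have hfx : ∀ n (w : Fin d → ℝ), (f n).mulVec w
      = (k n).mulVec ((Matrix.diagonal (α n)).mulVec ((k' n).mulVec w)) := fun n w => by
    rw [hf n, ← Matrix.mulVec_mulVec, ← Matrix.mulVec_mulVec]
  have hPd : ∀ n, pdist d ((f n).mulVec x) ((f n).mulVec y)
      = pdist d ((Matrix.diagonal (α n)).mulVec ((k' n).mulVec x))
               ((Matrix.diagonal (α n)).mulVec ((k' n).mulVec y)) := fun n => by
    rw [hfx n x, hfx n y, pdist_orth (hkt n)]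
  have hinner : ∀ n (w : Fin d → ℝ), (inner ℝ (eu d ((k' n).mulVec w)) (eu d e₁) : ℝ)
      = ((k' n).mulVec w) i0 := fun n w => by
    rw [inner_eu]
    simp [he₁, Pi.single_apply]
  have hnorm : ∀ n (w : Fin d → ℝ), ‖eu d ((k' n).mulVec w)‖ = ‖eu d w‖ :=
    fun n w => norm_orth (hk't n) w
  have hd2 : (1:ℝ) ≤ (d:ℝ) ^ 2 := by
    have h1 : (1:ℝ) ≤ (d:ℝ) := by exact_mod_cast hd.le
    nlinarith
  -- part 2
  have hbnd : ∀ n : ℕ,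
      pdist d ((f n).mulVec x) ((f n).mulVec y) *
        (|(inner ℝ (eu d ((k' n).mulVec x)) (eu d e₁) : ℝ)| / ‖eu d x‖) *
        (|(inner ℝ (eu d ((k' n).mulVec y)) (eu d e₁) : ℝ)| / ‖eu d y‖) ≤
      (d : ℝ) ^ 2 * (α n i1 / α n i0) * pdist d x y := by
    intro n
    have h1 := key_ineq (α n) (hpos n) (hbot n) (hsnd n)
      (mulVec_ne_zero_of_orth (hk't n) hx) (mulVec_ne_zero_of_orth (hk't n) hy)
    have h2 : pdist d ((k' n).mulVec x) ((k' n).mulVec y) = pdist d x y :=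
      pdist_orth (hk't n) x y
    have h3 : pdist d ((f n).mulVec x) ((f n).mulVec y) *
        (|(inner ℝ (eu d ((k' n).mulVec x)) (eu d e₁) : ℝ)| / ‖eu d x‖) *
        (|(inner ℝ (eu d ((k' n).mulVec y)) (eu d e₁) : ℝ)| / ‖eu d y‖)
        ≤ (α n i1 / α n i0) * pdist d x y := by
      rw [hPd n, hinner n x, hinner n y, ← hnorm n x, ← hnorm n y, ← h2]
      exact h1
    refine h3.trans ?_
    rw [mul_assoc]
    exact le_mul_of_one_le_left
      (mul_nonneg (div_pos (hpos n i1) (hpos n i0)).le (pdist_nonneg d x y)) hd2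
  refine ⟨?_, hbnd⟩
  -- part 1
  have hinner2 : ∀ n (w : Fin d → ℝ), (inner ℝ (eu d ((k' n).mulVec w)) (eu d e₁) : ℝ)
      = inner ℝ (eu d w) (eu d ((k' n)⁻¹.mulVec e₁)) := fun n w => by
    rw [inner_mulVec_left, hinv n]
  have hcx : Tendsto (fun n => (inner ℝ (eu d ((k' n).mulVec x)) (eu d e₁) : ℝ)) atTop
      (𝓝 (inner ℝ (eu d x) (eu d z))) := by
    simp_rw [hinner2]
    exact tendsto_const_nhds.inner hconv
  have hcy : Tendsto (fun n => (inner ℝ (eu d ((k' n).mulVec y)) (eu d e₁) : ℝ)) atTop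
      (𝓝 (inner ℝ (eu d y) (eu d z))) := by
    simp_rw [hinner2]
    exact tendsto_const_nhds.inner hconv
  have hLx : (inner ℝ (eu d x) (eu d z) : ℝ) ≠ 0 := by rw [real_inner_comm]; exact hzx
  have hLy : (inner ℝ (eu d y) (eu d z) : ℝ) ≠ 0 := by rw [real_inner_comm]; exact hzy
  set c : ℕ → ℝ := fun n =>
    (|(inner ℝ (eu d ((k' n).mulVec x)) (eu d e₁) : ℝ)| / ‖eu d x‖) *
    (|(inner ℝ (eu d ((k' n).mulVec y)) (eu d e₁) : ℝ)| / ‖eu d y‖) with hc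
  set L : ℝ := (|(inner ℝ (eu d x) (eu d z) : ℝ)| / ‖eu d x‖) *
    (|(inner ℝ (eu d y) (eu d z) : ℝ)| / ‖eu d y‖) with hL
  have hctend : Tendsto c atTop (𝓝 L) := ((hcx.abs.div_const _).mul (hcy.abs.div_const _))
  have hLpos : 0 < L :=
    mul_pos (div_pos (abs_pos.mpr hLx) (norm_eu_pos hx))
      (div_pos (abs_pos.mpr hLy) (norm_eu_pos hy))
  have hne10 : i1 ≠ i0 := by
    rw [hi0, hi1]
    exact Fin.ne_of_val_ne (by norm_num)
  have hD : Tendsto (fun n => (d:ℝ) ^ 2 * (α n i1 / α n i0) * pdist d x y) atTop (𝓝 0) := by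
    have h1 := ((hlittleo i1 hne10).const_mul ((d:ℝ) ^ 2)).mul_const (pdist d x y)
    simpa using h1
  have hPc0 : ∀ n, 0 ≤ pdist d ((f n).mulVec x) ((f n).mulVec y) * c n := fun n =>
    mul_nonneg (pdist_nonneg d _ _)
      (mul_nonneg (div_nonneg (abs_nonneg _) (norm_nonneg _))
        (div_nonneg (abs_nonneg _) (norm_nonneg _)))
  have hPcle : ∀ n, pdist d ((f n).mulVec x) ((f n).mulVec y) * c n
      ≤ (d:ℝ) ^ 2 * (α n i1 / α n i0) * pdist d x y := fun n => by
    rw [hc, ← mul_assoc]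
    exact hbnd n
  have hPc : Tendsto (fun n => pdist d ((f n).mulVec x) ((f n).mulVec y) * c n) atTop (𝓝 0) :=
    squeeze_zero hPc0 hPcle hD
  have hdiv : Tendsto (fun n => (pdist d ((f n).mulVec x) ((f n).mulVec y) * c n) / c n)
      atTop (𝓝 0) := by
    have h1 := hPc.div hctend (ne_of_gt hLpos)
    rw [zero_div] at h1
    exact h1
  have hcne : ∀ᶠ n in atTop, c n ≠ 0 := hctend.eventually_ne (ne_of_gt hLpos)
  have heq : (fun n => (pdist d ((f n).mulVec x) ((f n).mulVec y) * c n) / c n)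
      =ᶠ[atTop] fun n => pdist d ((f n).mulVec x) ((f n).mulVec y) :=
    hcne.mono fun n hn => mul_div_cancel_right₀ _ hn
  exact Tendsto.congr' heq hdiv
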